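/- Pure shift case of the Baik–Deift–Rains identity: for χ_{−w}(t) = t^{−w} one has det(I + sP − s L(χ_{−w}) Q_n L(χ_w)) = (1+s)^{n−w} det(I − s² Q_n L(χ_w) Q L(χ_{−w}) Q_n) for all n, w ∈ ℤ and s ≠ −1. -/
import Mathlib


open Filter

noncomputable section

/-- Fourier coefficients of the pointwise product of two scalar functions on the circle. -/
def convS (a b : ℤ → ℂ) : ℤ → ℂ := fun n => ∑' m : ℤ, a m * b (n - m)

/-- Fourier coefficients of the constant function `1`. -/
def oneS : ℤ → ℂ := fun n => if n = 0 then 1 else 0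

/-- Kernel of an operator on `ℓ²(ℤ, ℂ)`. -/
abbrev KS := ℤ → ℤ → ℂ

/-- Composition of operators on `ℓ²(ℤ, ℂ)`, on the level of kernels. -/
def compS (A B : KS) : KS := fun j l => ∑' m : ℤ, A j m * B m l

/-- The identity operator on `ℓ²(ℤ, ℂ)`. -/
def idS : KS := fun j l => if j = l then 1 else 0

/-- The Laurent operator `L(a) = (a_{j-k})_{j,k ∈ ℤ}`. -/
def LS (a : ℤ → ℂ) : KS := fun j l => a (j - l)

/-- The projection `P` onto coordinates `k ≥ 0`. -/
def PS : KS := fun j l => if j = l ∧ 0 ≤ j then 1 else 0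

/-- The projection `Q = I - P` onto coordinates `k < 0`. -/
def QS : KS := fun j l => if j = l ∧ j < 0 then 1 else 0

/-- The projection `Q_n` onto coordinates `k ≥ n`. -/
def QnS (n : ℤ) : KS := fun j l => if j = l ∧ n ≤ j then 1 else 0

/-- Fourier coefficients of `χ_w(t) = t^w`. -/
def chiS (w : ℤ) : ℤ → ℂ := fun n => if n = w then 1 else 0

/-- Finite section of a kernel over the coordinates `[-m, m]`. -/
def secS (A : KS) (m : ℕ) : Matrix (Fin (2 * m + 1)) (Fin (2 * m + 1)) ℂ :=
  Matrix.of fun p q => A ((p : ℤ) - (m : ℤ)) ((q : ℤ) - (m : ℤ))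

/-- The (Fredholm) determinant of an operator on `ℓ²(ℤ, ℂ)`, as the limit of
determinants of finite sections. -/
def detS (A : KS) : ℂ := limUnder atTop fun m : ℕ => (secS A m).det

/-- The continuous function on the circle with Fourier coefficients `a`
(absolutely convergent series for `a ∈ K₁¹`). -/
def Fhat (a : ℤ → ℂ) (θ : ℝ) : ℂ := ∑' n : ℤ, a n * Complex.exp ((n : ℂ) * θ * Complex.I)

lemma comp1 (n w : ℤ) : compS (QnS n) (LS (chiS w)) =
    fun j l => if j - l = w ∧ n ≤ j then 1 else 0 := by
  funext j l
  unfold compS QnS LS chiS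
  rw [tsum_eq_single j]
  · by_cases h : n ≤ j <;> simp [h, and_comm]
  · intro m hm; simp [Ne.symm hm]

lemma comp2 (n w : ℤ) :
    compS (LS (chiS (-w))) (compS (QnS n) (LS (chiS w))) = QnS (n - w) := by
  rw [comp1]; funext j l
  unfold compS LS chiS QnS
  rw [tsum_eq_single (j + w)]
  · have e1 : j - (j + w) = -w := by ring
    have e2 : ((j + w) - l = w ∧ n ≤ j + w) ↔ (j = l ∧ n - w ≤ j) := by omega
    simp only [e1, e2, if_pos rfl, eq_self_iff_true, if_true, one_mul]
  · intro m hm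
    have : j - m ≠ -w := by omega
    simp [this]

lemma comp3 (n w : ℤ) : compS (LS (chiS (-w))) (QnS n) =
    fun j l => if j - l = -w ∧ n ≤ l then 1 else 0 := by
  funext j l
  unfold compS QnS LS chiS
  rw [tsum_eq_single l]
  · by_cases h : n ≤ l <;> simp [h]
  · intro m hm; simp [hm]

lemma comp4 (n w : ℤ) : compS QS (compS (LS (chiS (-w))) (QnS n)) =
    fun j l => if j < 0 ∧ j - l = -w ∧ n ≤ l then 1 else 0 := by
  rw [comp3]; funext j l
  unfold compS QS
  rw [tsum_eq_single j]
  · by_cases h : j < 0 <;> simp [h, and_assoc]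
  · intro m hm; simp [Ne.symm hm]

lemma comp5 (n w : ℤ) :
    compS (LS (chiS w)) (compS QS (compS (LS (chiS (-w))) (QnS n))) =
    fun j l => if j = l ∧ n ≤ j ∧ j < w then 1 else 0 := by
  rw [comp4]; funext j l
  unfold compS LS chiS
  rw [tsum_eq_single (j - w)]
  · have e1 : j - (j - w) = w := by ring
    have e2 : (j - w < 0 ∧ (j - w) - l = -w ∧ n ≤ l) ↔ (j = l ∧ n ≤ j ∧ j < w) := by omega
    simp only [e1, e2, if_pos rfl, eq_self_iff_true, if_true, one_mul]
  · intro m hm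
    have : j - m ≠ w := by omega
    simp [this]

lemma comp6 (n w : ℤ) :
    compS (QnS n) (compS (LS (chiS w)) (compS QS (compS (LS (chiS (-w))) (QnS n)))) =
    fun j l => if j = l ∧ n ≤ j ∧ j < w then 1 else 0 := by
  rw [comp5]; funext j l
  unfold compS QnS
  rw [tsum_eq_single j]
  · by_cases h : n ≤ j <;> simp [h]
  · intro m hm; simp [Ne.symm hm]

lemma secS_diag (f : ℤ → ℂ) (m : ℕ) :
    secS (fun j l => if j = l then f j else 0) m =
    Matrix.diagonal (fun p : Fin (2 * m + 1) => f ((p : ℤ) - (m : ℤ))) := by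
  ext p q
  by_cases h : p = q
  · simp [h, secS, Matrix.diagonal]
  · have h1 : (p : ℕ) ≠ (q : ℕ) := Fin.val_ne_of_ne h
    have h2 : ((p : ℤ) - (m : ℤ)) ≠ ((q : ℤ) - (m : ℤ)) := by omega
    simp [secS, Matrix.diagonal, h, h2, h1]

lemma prod_window (f : ℤ → ℂ) (a b : ℤ) (c : ℂ)
    (hf : ∀ j, f j = if a ≤ j ∧ j < b then c else 1) (m : ℕ)
    (hm : |a| ≤ (m : ℤ) ∧ |b| ≤ (m : ℤ)) :
    ∏ p : Fin (2 * m + 1), f ((p : ℤ) - (m : ℤ)) = c ^ (b - a).toNat := by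
  have h1 : ∏ p : Fin (2 * m + 1), f ((p : ℤ) - (m : ℤ)) =
      ∏ j ∈ Finset.Icc (-(m : ℤ)) m, f j := by
    refine Finset.prod_nbij' (fun p : Fin (2 * m + 1) => (p : ℤ) - (m : ℤ))
      (fun j => (⟨(2 * m) ⊓ (j + m).toNat, by omega⟩ : Fin (2 * m + 1)))
      ?_ ?_ ?_ ?_ (fun _ _ => rfl)
    · intro p _
      simp only [Finset.mem_Icc]
      have := p.isLt
      omega
    · exact fun j _ => Finset.mem_univ _
    · intro p _
      have := p.isLt
      apply Fin.ext
      simp only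
      omega
    · intro j hj
      simp only [Finset.mem_Icc] at hj
      simp only
      omega
  rw [h1]
  have ha := abs_le.mp hm.1
  have hb := abs_le.mp hm.2
  have h2 : Finset.Ico a b ⊆ Finset.Icc (-(m : ℤ)) m := by
    intro x hx; simp only [Finset.mem_Ico, Finset.mem_Icc] at *
    omega
  rw [← Finset.prod_subset h2
    (by intro x _ hx2; simp only [Finset.mem_Ico] at hx2; rw [hf x, if_neg hx2])]
  rw [Finset.prod_congr rfl
    (fun x hx => by simp only [Finset.mem_Ico] at hx; rw [hf x, if_pos hx])]
  simp [Int.card_Ico]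

lemma detS_diag_window (f : ℤ → ℂ) (a b : ℤ) (c : ℂ)
    (hf : ∀ j, f j = if a ≤ j ∧ j < b then c else 1) :
    detS (fun j l => if j = l then f j else 0) = c ^ (b - a).toNat := by
  have h : Tendsto (fun m : ℕ => (secS (fun j l => if j = l then f j else 0) m).det)
      atTop (nhds (c ^ (b - a).toNat)) := by
    apply Tendsto.congr' _ tendsto_const_nhds
    filter_upwards [eventually_ge_atTop (|a| ⊔ |b|).toNat] with m hm
    rw [secS_diag, Matrix.det_diagonal]
    have key : |a| ⊔ |b| ≤ (m : ℤ) := le_trans (Int.self_le_toNat _) (by exact_mod_cast hm)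
    exact (prod_window f a b c hf m
      ⟨le_trans (le_max_left _ _) key, le_trans (le_max_right _ _) key⟩).symm
  exact h.limUnder_eq

/-- Pure shift case: for all `n, w ∈ ℤ` and `s ≠ -1`,
`det(I + sP - sL(χ_{-w})Q_nL(χ_w)) = (1+s)^{n-w} det(I - s²Q_nL(χ_w)QL(χ_{-w})Q_n)`. -/
theorem bdr_pure_shift (n w : ℤ) (s : ℂ) (hs : s ≠ -1) :
    detS (idS + s • PS - s • compS (LS (chiS (-w))) (compS (QnS n) (LS (chiS w))))
      = (1 + s) ^ (n - w)
          * detS (idS - s ^ 2 • compS (QnS n)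
              (compS (LS (chiS w)) (compS QS (compS (LS (chiS (-w))) (QnS n))))) := by
  have hs1 : (1 : ℂ) + s ≠ 0 := by
    intro h; apply hs; linear_combination h
  have hL : (idS + s • PS - s • compS (LS (chiS (-w))) (compS (QnS n) (LS (chiS w)))) =
      fun j l => if j = l then
        ((1 : ℂ) + (if 0 ≤ j then s else 0) - (if n - w ≤ j then s else 0)) else 0 := by
    rw [comp2]; funext j l
    simp only [Pi.add_apply, Pi.sub_apply, Pi.smul_apply, smul_eq_mul, idS, PS, QnS]
    by_cases h : j = l <;> by_cases h1 : 0 ≤ j <;> by_cases h2 : n - w ≤ j <;>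
      simp [h, h1, h2]
  have hR : (idS - s ^ 2 • compS (QnS n)
      (compS (LS (chiS w)) (compS QS (compS (LS (chiS (-w))) (QnS n))))) =
      fun j l => if j = l then
        ((1 : ℂ) - (if n ≤ j ∧ j < w then s ^ 2 else 0)) else 0 := by
    rw [comp6]; funext j l
    simp only [Pi.sub_apply, Pi.smul_apply, smul_eq_mul, idS]
    by_cases h : j = l <;> by_cases h1 : n ≤ j ∧ j < w <;> simp [h, h1]
  rw [hL, hR]
  have hRdet : detS (fun j l => if j = l then
      ((1 : ℂ) - (if n ≤ j ∧ j < w then s ^ 2 else 0)) else 0)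
      = (1 - s ^ 2) ^ (w - n).toNat :=
    detS_diag_window _ n w (1 - s ^ 2)
      (fun j => by by_cases h : n ≤ j ∧ j < w <;> simp [h])
  rw [hRdet]
  rcases le_or_gt w n with hnw | hnw
  · have hLdet : detS (fun j l => if j = l then
        ((1 : ℂ) + (if 0 ≤ j then s else 0) - (if n - w ≤ j then s else 0)) else 0)
        = (1 + s) ^ ((n - w) - 0).toNat :=
      detS_diag_window _ 0 (n - w) (1 + s)
        (fun j => by
          rcases le_or_gt 0 j with h1 | h1 <;> rcases le_or_gt (n - w) j with h2 | h2
          · rw [if_pos h1, if_pos h2, if_neg (by omega)]; ring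
          · rw [if_pos h1, if_neg (by omega), if_pos ⟨h1, h2⟩]; ring
          · exfalso; omega
          · rw [if_neg (by omega), if_neg (by omega), if_neg (by omega)]; ring)
    rw [hLdet]
    have h0 : (w - n).toNat = 0 := by omega
    rw [h0, pow_zero, mul_one]
    conv_rhs => rw [show n - w = (((n - w) - 0).toNat : ℤ) from by omega]
    rw [zpow_natCast]
  · have hLdet : detS (fun j l => if j = l then
        ((1 : ℂ) + (if 0 ≤ j then s else 0) - (if n - w ≤ j then s else 0)) else 0)
        = (1 - s) ^ (0 - (n - w)).toNat :=
      detS_diag_window _ (n - w) 0 (1 - s)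
        (fun j => by
          rcases le_or_gt 0 j with h1 | h1 <;> rcases le_or_gt (n - w) j with h2 | h2
          · rw [if_pos h1, if_pos h2, if_neg (by omega)]; ring
          · exfalso; omega
          · rw [if_neg (by omega), if_pos h2, if_pos ⟨h2, h1⟩]; ring
          · rw [if_neg (by omega), if_neg (by omega), if_neg (by omega)]; ring)
    rw [hLdet]
    have e1 : (0 - (n - w)).toNat = (w - n).toNat := by omega
    have e2 : n - w = -(((w - n).toNat : ℤ)) := by omega
    rw [e1, e2, zpow_neg, zpow_natCast]
    rw [show (1 : ℂ) - s ^ 2 = (1 + s) * (1 - s) by ring, mul_pow]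
    field_simp
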